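/- arXiv:1703.02001 — 4 statements merged into one kernel-verified Lean document; each statement's English description precedes it below -/
import Mathlib

section
/- Let V be a finite-dimensional real vector space and let A, B ⊆ V be cones such that: (1) A is a closed convex cone which is strictly convex, i.e. A ∩ (−A) ⊆ {0}; (2) B = B⁺ ∪ (−B⁺), where B⁺ is a nonempty open convex cone with 0 ∉ B⁺ and B⁺ ∩ (−B⁺) = ∅ (so B is open with the two convex connected components B⁺ and −B⁺, exchanged by negation); (3) for every a ∈ B one has a ∈ A or −a ∈ A. Then A ∩ B is exactly one of the two connected components of B, i.e. A ∩ B = B⁺ or A ∩ B = −B⁺. (This is Lemma 4.1 of the paper, with the negation-symmetry of B, implicit in the paper and satisfied in its application to positivity cones of quadratic forms, made explicit.) -/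
/-- Lemma 4.1 of the paper: if `A` is a closed, strictly convex cone, `B = B⁺ ∪ (-B⁺)` is an
open cone with two convex connected components exchanged by negation, and every element of `B`
lies in `A` up to sign, then `A ∩ B` is exactly one of the two components of `B`. -/
theorem stmt_0 {V : Type*} [NormedAddCommGroup V] [NormedSpace ℝ V] [FiniteDimensional ℝ V]
    (A Bp : Set V)
    (hAclosed : IsClosed A) (hAconvex : Convex ℝ A)
    (hAcone : ∀ c : ℝ, 0 < c → ∀ x ∈ A, c • x ∈ A)
    (hAstrict : A ∩ (-A) ⊆ {0})
    (hBpne : Bp.Nonempty) (hBpopen : IsOpen Bp) (hBpconvex : Convex ℝ Bp)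
    (hBpcone : ∀ c : ℝ, 0 < c → ∀ x ∈ Bp, c • x ∈ Bp)
    (hBp0 : (0 : V) ∉ Bp) (hBpdisj : Bp ∩ (-Bp) = ∅)
    (halt : ∀ a ∈ Bp ∪ (-Bp), a ∈ A ∨ -a ∈ A) :
    A ∩ (Bp ∪ (-Bp)) = Bp ∨ A ∩ (Bp ∪ (-Bp)) = -Bp := by
  have hpre : IsPreconnected Bp := hBpconvex.isPreconnected
  have hcover : Bp ⊆ A ∪ (-A) := by
    intro x hx
    rcases halt x (Or.inl hx) with h | h
    · exact Or.inl h
    · exact Or.inr (by simpa [Set.mem_neg] using h)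
  have hnot : ¬ (Bp ∩ (A ∩ (-A))).Nonempty := by
    rintro ⟨x, hxB, hxA⟩
    have : x = 0 := hAstrict hxA
    exact hBp0 (this ▸ hxB)
  have key : Bp ⊆ A ∨ Bp ⊆ (-A) := by
    by_contra h
    push_neg at h
    obtain ⟨h1, h2⟩ := h
    obtain ⟨x, hxB, hxA⟩ := Set.not_subset.mp h1
    obtain ⟨y, hyB, hyA⟩ := Set.not_subset.mp h2
    have hxnA : x ∈ -A := (hcover hxB).resolve_left hxA
    have hyA' : y ∈ A := (hcover hyB).resolve_right hyA
    have := (isPreconnected_closed_iff.mp hpre) A (-A) hAclosed hAclosed.neg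
      hcover ⟨y, hyB, hyA'⟩ ⟨x, hxB, hxnA⟩
    exact hnot this
  rcases key with hBA | hBA
  · left
    apply Set.Subset.antisymm
    · rintro x ⟨hxA, hx | hx⟩
      · exact hx
      · exfalso
        have hnxA : -x ∈ A := hBA (by simpa [Set.mem_neg] using hx)
        have hx0 : x = 0 := hAstrict ⟨hxA, by simpa [Set.mem_neg] using hnxA⟩
        have : (0 : V) ∈ Bp := by simpa [hx0] using (show -x ∈ Bp by simpa [Set.mem_neg] using hx)
        exact hBp0 this
    · intro x hx
      exact ⟨hBA hx, Or.inl hx⟩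
  · right
    apply Set.Subset.antisymm
    · rintro x ⟨hxA, hx | hx⟩
      · exfalso
        have hxnA : x ∈ -A := hBA hx
        have hx0 : x = 0 := hAstrict ⟨hxA, hxnA⟩
        exact hBp0 (hx0 ▸ hx)
      · exact hx
    · intro x hx
      have hnx : -x ∈ Bp := by simpa [Set.mem_neg] using hx
      have : -x ∈ -A := hBA hnx
      exact ⟨by simpa [Set.mem_neg] using this, Or.inr hx⟩
end

section
/- Let V be a finite-dimensional real vector space, let A ⊆ V be a closed convex cone with A ∩ (−A) ⊆ {0}, and let C ⊆ V be a convex set with 0 ∉ C and C ⊆ A ∪ (−A). If C ∩ A ≠ ∅, then C ⊆ A. (This is the core step in the proof of Lemma 4.1 of the paper: along the segment from a point b₀ ∈ C ∩ A to any b₁ ∈ C, the alternative b_t ∈ A or −b_t ∈ A together with closedness and strict convexity of A forces every point, in particular b₁, to lie in A.) -/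
/-- Core step of Lemma 4.1 of the paper: if `A` is a closed, strictly convex cone and `C` is a
convex set avoiding `0` with `C ⊆ A ∪ (-A)`, then `C` meets `A` only if it is contained in `A`. -/
theorem stmt_1 {V : Type*} [NormedAddCommGroup V] [NormedSpace ℝ V] [FiniteDimensional ℝ V]
    (A C : Set V)
    (hAclosed : IsClosed A) (hAconvex : Convex ℝ A)
    (hAcone : ∀ c : ℝ, 0 < c → ∀ x ∈ A, c • x ∈ A)
    (hAstrict : A ∩ (-A) ⊆ {0})
    (hCconvex : Convex ℝ C) (hC0 : (0 : V) ∉ C)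
    (hCsub : C ⊆ A ∪ (-A))
    (hCA : (C ∩ A).Nonempty) :
    C ⊆ A := by
  obtain ⟨b₀, hb₀C, hb₀A⟩ := hCA
  intro b₁ hb₁C
  by_contra hb₁A
  -- the segment map
  set f : ℝ → V := fun t => (1 - t) • b₀ + t • b₁ with hf
  have hfcont : Continuous f := by
    apply Continuous.add
    · exact (continuous_const.sub continuous_id).smul continuous_const
    · exact continuous_id.smul continuous_const
  have hfC : ∀ t ∈ Set.Icc (0:ℝ) 1, f t ∈ C := by
    intro t ht
    exact hCconvex hb₀C hb₁C (by linarith [ht.2]) ht.1 (by ring)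
  have hne : ∀ t ∈ Set.Icc (0:ℝ) 1, f t ≠ 0 := fun t ht h => hC0 (h ▸ hfC t ht)
  -- two open sets
  have huo : IsOpen (f ⁻¹' (-A))ᶜ := ((hAclosed.neg.preimage hfcont)).isOpen_compl
  have hvo : IsOpen (f ⁻¹' A)ᶜ := ((hAclosed.preimage hfcont)).isOpen_compl
  have hcover : Set.Icc (0:ℝ) 1 ⊆ (f ⁻¹' (-A))ᶜ ∪ (f ⁻¹' A)ᶜ := by
    intro t ht
    by_contra h
    simp only [Set.mem_union, Set.mem_compl_iff, not_not, not_or] at h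
    exact hne t ht (hAstrict ⟨h.2, h.1⟩)
  have hu0 : ((Set.Icc (0:ℝ) 1) ∩ (f ⁻¹' (-A))ᶜ).Nonempty := by
    refine ⟨0, ⟨le_refl _, zero_le_one⟩, ?_⟩
    intro h
    have hf0 : f 0 = b₀ := by simp [hf]
    have h' : b₀ ∈ -A := by rw [← hf0]; exact h
    exact hne 0 ⟨le_refl _, zero_le_one⟩ (by rw [hf0]; exact hAstrict ⟨hb₀A, h'⟩)
  have hv1 : ((Set.Icc (0:ℝ) 1) ∩ (f ⁻¹' A)ᶜ).Nonempty := by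
    refine ⟨1, ⟨zero_le_one, le_refl _⟩, ?_⟩
    have hf1 : f 1 = b₁ := by simp [hf]
    simpa [hf1] using hb₁A
  obtain ⟨t, htI, htu, htv⟩ := (isPreconnected_Icc (a := (0:ℝ)) (b := 1)) _ _ huo hvo hcover hu0 hv1
  rcases hCsub (hfC t htI) with h | h
  · exact htv h
  · exact htu h
end

section
/- Let V be a finite-dimensional real vector space with a symmetric bilinear form B of signature (1, dim V − 1), let Q(x) := B(x,x), let e ∈ V with Q(e) > 0 realize the signature decomposition, and set C := {x ∈ V : Q(x) > 0} and C⁺ := {x ∈ C : B(x,e) > 0}. Let A ⊆ V be a closed convex cone with A ∩ (−A) ⊆ {0} such that for every x ∈ C one has x ∈ A or −x ∈ A. Then A ∩ C = C⁺ or A ∩ C = −C⁺; that is, A ∩ C consists of exactly one of the two connected components of C. (This is the abstract statement behind Lemma 4.2 of the paper: the intersection of the pseudo-effective cone with the cone of positive (1,1)-classes is exactly one connected component of the latter, defining the positive cone 𝒞_X⁺.) -/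
set_option maxHeartbeats 800000

open Set

/-- Cauchy–Schwarz on the orthogonal complement of `e`, where `B` is negative semidefinite. -/
private lemma aux_cs {V : Type*} [AddCommGroup V] [Module ℝ V]
    (B : V →ₗ[ℝ] V →ₗ[ℝ] ℝ) (hsymm : ∀ x y, B x y = B y x) (e : V)
    (hneg : ∀ x, B x e = 0 → x ≠ 0 → B x x < 0)
    (u v : V) (hu : B u e = 0) (hv : B v e = 0) :
    (B u v) ^ 2 ≤ B u u * B v v := by
  have key : ∀ t : ℝ, 0 ≤ (-(B v v)) * (t * t) + (-(2 * B u v)) * t + (-(B u u)) := by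
    intro t
    have h1 : B (u + t • v) e = 0 := by
      simp [map_add, map_smul, hu, hv]
    have h2 : B (u + t • v) (u + t • v) ≤ 0 := by
      rcases eq_or_ne (u + t • v) 0 with h | h
      · simp [h]
      · exact (hneg _ h1 h).le
    have expand : B (u + t • v) (u + t • v)
        = B u u + 2 * B u v * t + B v v * t ^ 2 := by
      simp only [map_add, map_smul, LinearMap.add_apply, LinearMap.smul_apply,
        smul_eq_mul, hsymm v u]
      ring
    rw [expand] at h2
    nlinarith [h2]
  have hd : discrim (-(B v v)) (-(2 * B u v)) (-(B u u)) ≤ 0 := discrim_le_zero key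
  rw [discrim] at hd
  nlinarith [hd]

/-- Reverse Cauchy–Schwarz: two elements in the same component of `{Q > 0}` pair positively. -/
private lemma aux_pos {V : Type*} [AddCommGroup V] [Module ℝ V]
    (B : V →ₗ[ℝ] V →ₗ[ℝ] ℝ) (hsymm : ∀ x y, B x y = B y x) (e : V) (he : 0 < B e e)
    (hneg : ∀ x, B x e = 0 → x ≠ 0 → B x x < 0)
    (x y : V) (hx : 0 < B x x) (hxe : 0 < B x e) (hy : 0 < B y y) (hye : 0 < B y e) :
    0 < B x y := by
  set a : ℝ := B x e / B e e with ha
  set b : ℝ := B y e / B e e with hb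
  have ha' : B x e = a * B e e := by
    rw [ha, div_mul_cancel₀ _ he.ne']
  have hb' : B y e = b * B e e := by
    rw [hb, div_mul_cancel₀ _ he.ne']
  have hapos : 0 < a := div_pos hxe he
  have hbpos : 0 < b := div_pos hye he
  set u : V := x - a • e with hu
  set v : V := y - b • e with hv
  have hue : B u e = 0 := by
    simp only [hu, map_sub, map_smul, LinearMap.sub_apply, LinearMap.smul_apply, smul_eq_mul]
    rw [ha']; ring
  have hve : B v e = 0 := by
    simp only [hv, map_sub, map_smul, LinearMap.sub_apply, LinearMap.smul_apply, smul_eq_mul]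
    rw [hb']; ring
  have hQu : B u u = B x x - a ^ 2 * B e e := by
    simp only [hu, map_sub, map_smul, LinearMap.sub_apply, LinearMap.smul_apply, smul_eq_mul]
    rw [hsymm e x, ha']; ring
  have hQv : B v v = B y y - b ^ 2 * B e e := by
    simp only [hv, map_sub, map_smul, LinearMap.sub_apply, LinearMap.smul_apply, smul_eq_mul]
    rw [hsymm e y, hb']; ring
  have hBuv : B u v = B x y - a * b * B e e := by
    simp only [hu, hv, map_sub, map_smul, LinearMap.sub_apply, LinearMap.smul_apply, smul_eq_mul]
    rw [hsymm e y, hb', ha']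
    ring
  have hQu0 : B u u ≤ 0 := by
    rcases eq_or_ne u 0 with h | h
    · simp [h]
    · exact (hneg _ hue h).le
  have hQv0 : B v v ≤ 0 := by
    rcases eq_or_ne v 0 with h | h
    · simp [h]
    · exact (hneg _ hve h).le
  have hcs : (B u v) ^ 2 ≤ B u u * B v v := aux_cs B hsymm e hneg u v hue hve
  -- -B u u < a^2 * B e e, -B v v < b^2 * B e e
  have h1 : -B u u < a ^ 2 * B e e := by rw [hQu]; linarith
  have h2 : -B v v < b ^ 2 * B e e := by rw [hQv]; linarith
  have hprod : (B u v) ^ 2 < (a * b * B e e) ^ 2 := by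
    have hA : (0:ℝ) < a ^ 2 * B e e := by positivity
    have hB : (0:ℝ) < b ^ 2 * B e e := by positivity
    have : B u u * B v v = (-B u u) * (-B v v) := by ring
    calc (B u v) ^ 2 ≤ (-B u u) * (-B v v) := by linarith [hcs, this ▸ hcs]
      _ < (a ^ 2 * B e e) * (b ^ 2 * B e e) := by
          rcases eq_or_lt_of_le (neg_nonneg.mpr hQu0) with h | h
          · rw [← h]; nlinarith
          · nlinarith
      _ = (a * b * B e e) ^ 2 := by ring
  have habe : 0 < a * b * B e e := by positivity
  nlinarith [sq_nonneg (B u v + a * b * B e e), hBuv]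

/-- Abstract form of Lemma 4.2 of the paper: if `B` is a symmetric bilinear form of signature
`(1, dim V - 1)` realized by `e`, `C = {Q > 0}`, `C⁺ = {x ∈ C : B(x,e) > 0}`, and `A` is a
closed strictly convex cone containing every element of `C` up to sign, then `A ∩ C` is
exactly one of the two connected components `C⁺`, `-C⁺` of `C`. -/
theorem stmt_3 {V : Type*} [NormedAddCommGroup V] [NormedSpace ℝ V] [FiniteDimensional ℝ V]
    (B : V →ₗ[ℝ] V →ₗ[ℝ] ℝ) (hsymm : ∀ x y, B x y = B y x)
    (e : V) (he : 0 < B e e)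
    (hneg : ∀ x, B x e = 0 → x ≠ 0 → B x x < 0)
    (A : Set V)
    (hAclosed : IsClosed A) (hAconvex : Convex ℝ A)
    (hAcone : ∀ c : ℝ, 0 < c → ∀ x ∈ A, c • x ∈ A)
    (hAstrict : A ∩ (-A) ⊆ {0})
    (halt : ∀ x : V, 0 < B x x → x ∈ A ∨ -x ∈ A) :
    A ∩ {x | 0 < B x x} = {x | 0 < B x x ∧ 0 < B x e} ∨
      A ∩ {x | 0 < B x x} = -{x | 0 < B x x ∧ 0 < B x e} := by
  have hne0 : ∀ x : V, 0 < B x x → x ≠ 0 := by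
    rintro x hx rfl
    simp at hx
  have hsign : ∀ x : V, 0 < B x x → B x e ≠ 0 := by
    intro x hx h
    have := hneg x h (hne0 x hx)
    linarith
  set Cp : Set V := {x | 0 < B x x ∧ 0 < B x e} with hCp
  -- convexity of Cp
  have hconv : Convex ℝ Cp := by
    intro x hx y hy s t hs ht hst
    have hxy : 0 < B x y := aux_pos B hsymm e he hneg x y hx.1 hx.2 hy.1 hy.2
    have hexpand : B (s • x + t • y) (s • x + t • y)
        = s ^ 2 * B x x + 2 * (s * t) * B x y + t ^ 2 * B y y := by
      simp only [map_add, map_smul, LinearMap.add_apply, LinearMap.smul_apply, smul_eq_mul,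
        hsymm y x]
      ring
    have heval : B (s • x + t • y) e = s * B x e + t * B y e := by
      simp [map_add, map_smul]
    constructor
    · rw [hexpand]
      rcases hs.lt_or_eq with hs' | hs'
      · nlinarith [mul_pos (pow_pos hs' 2) hx.1,
          mul_nonneg (mul_nonneg hs'.le ht) hxy.le,
          mul_nonneg (mul_nonneg ht ht) hy.1.le]
      · have ht' : t = 1 := by linarith
        rw [← hs', ht']
        nlinarith [hy.1]
    · rw [heval]
      rcases hs.lt_or_eq with hs' | hs'
      · rcases ht.lt_or_eq with ht' | ht'
        · nlinarith [mul_pos hs' hx.2, mul_pos ht' hy.2]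
        · rw [← ht']; nlinarith [mul_pos hs' hx.2]
      · have ht' : t = 1 := by linarith
        rw [← hs', ht']
        nlinarith [hy.2]
  have hpre : IsPreconnected Cp := hconv.isPreconnected
  -- Cp ⊆ A or Cp ⊆ -A
  have hnotboth : ∀ z : V, z ∈ Cp → ¬(z ∈ A ∧ z ∈ -A) := by
    rintro z hz ⟨h1, h2⟩
    exact hne0 z hz.1 (hAstrict ⟨h1, h2⟩)
  have key : Cp ⊆ A ∨ Cp ⊆ -A := by
    by_contra hcon
    push_neg at hcon
    obtain ⟨h1, h2⟩ := hcon
    rw [Set.not_subset] at h1 h2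
    obtain ⟨y, hyCp, hyA⟩ := h1
    obtain ⟨x, hxCp, hxnA⟩ := h2
    -- y ∈ Cp, y ∉ A (so y ∈ -A); x ∈ Cp, x ∉ -A (so x ∈ A)
    have hynA : y ∈ -A := by
      rcases halt y hyCp.1 with h | h
      · exact absurd h hyA
      · exact h
    have hxA : x ∈ A := by
      rcases halt x hxCp.1 with h | h
      · exact h
      · exact absurd h hxnA
    have hopen1 : IsOpen Aᶜ := hAclosed.isOpen_compl
    have hopen2 : IsOpen (-A)ᶜ := hAclosed.neg.isOpen_compl
    have hcover : Cp ⊆ Aᶜ ∪ (-A)ᶜ := by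
      intro z hz
      by_contra h
      simp only [mem_union, mem_compl_iff, not_or, not_not] at h
      exact hnotboth z hz ⟨h.1, h.2⟩
    obtain ⟨z, hzCp, hz1, hz2⟩ :=
      hpre Aᶜ (-A)ᶜ hopen1 hopen2 hcover ⟨y, hyCp, hyA⟩ ⟨x, hxCp, hxnA⟩
    rcases halt z hzCp.1 with h | h
    · exact hz1 h
    · exact hz2 h
  rcases key with hsub | hsub
  · left
    ext x
    constructor
    · rintro ⟨hxA, hxQ⟩
      refine ⟨hxQ, ?_⟩
      rcases (hsign x hxQ).lt_or_gt with h | h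
      · exfalso
        have hnx : -x ∈ Cp := by
          constructor
          · simpa using hxQ
          · simp only [map_neg, LinearMap.neg_apply]
            linarith
        have : x ∈ -A := by
          rw [Set.mem_neg]
          exact hsub hnx
        exact hne0 x hxQ (hAstrict ⟨hxA, this⟩)
      · exact h
    · rintro ⟨hxQ, hxe⟩
      exact ⟨hsub ⟨hxQ, hxe⟩, hxQ⟩
  · right
    ext x
    simp only [Set.mem_neg, Set.mem_inter_iff, Set.mem_setOf_eq]
    constructor
    · rintro ⟨hxA, hxQ⟩
      have hQnx : 0 < B (-x) (-x) := by simpa using hxQ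
      refine ⟨hQnx, ?_⟩
      simp only [map_neg, LinearMap.neg_apply]
      rcases (hsign x hxQ).lt_or_gt with h | h
      · linarith
      · exfalso
        have hx' : x ∈ Cp := ⟨hxQ, h⟩
        have : x ∈ -A := hsub hx'
        exact hne0 x hxQ (hAstrict ⟨hxA, this⟩)
    · rintro ⟨hQnx, hnxe⟩
      have hxQ : 0 < B x x := by simpa using hQnx
      have hnxA : -x ∈ -A := hsub ⟨hQnx, hnxe⟩
      rw [Set.mem_neg, neg_neg] at hnxA
      exact ⟨hnxA, hxQ⟩
end

section
/- Let L be a finite-dimensional real vector space with a nondegenerate symmetric bilinear form ⟨·,·⟩, let Λ ⊆ L be a countable subset, fix ξ ∈ L, r, a ∈ ℝ and m ∈ ℝ with m ≠ 0, and equip ℝ × L × ℝ with the Mukai pairing ((r₁,ξ₁,a₁),(r₂,ξ₂,a₂)) := ⟨ξ₁,ξ₂⟩ − r₁a₂ − r₂a₁; set α_{m,ω} := (−r, m r ω, a + m⟨ω,ξ⟩). Then the set N := {ω ∈ L : there exist s, b ∈ ℤ and D ∈ Λ with rD − sξ ≠ 0 and (α_{m,ω}, (s,D,b)) = 0} is contained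 in a countable union of proper affine hyperplanes of L; in particular its complement L ∖ N is dense in L. (This is the abstract content of Lemma 5.1 of the paper: for ω sufficiently generic, q_M(λ_v(α_{m,ω}), β) ≠ 0 for every integral class β.) -/
open Filter Topology



/-- The Mukai pairing on `ℝ × L × ℝ` associated to a bilinear form `⟨·,·⟩` on `L`:
`((r₁,ξ₁,a₁),(r₂,ξ₂,a₂)) ↦ ⟨ξ₁,ξ₂⟩ - r₁a₂ - r₂a₁`. -/
def mukaiPairing {L : Type*} [AddCommGroup L] [Module ℝ L]
    (Bl : L →ₗ[ℝ] L →ₗ[ℝ] ℝ) (x y : ℝ × L × ℝ) : ℝ :=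
  Bl x.2.1 y.2.1 - x.1 * y.2.2 - y.1 * x.2.2

/-- The class `α_{m,ω} = (-r, m r ω, a + m⟨ω,ξ⟩)`. -/
def alphaOmega {L : Type*} [AddCommGroup L] [Module ℝ L]
    (Bl : L →ₗ[ℝ] L →ₗ[ℝ] ℝ) (r a m : ℝ) (ξ ω : L) : ℝ × L × ℝ :=
  (-r, (m * r) • ω, a + m * Bl ω ξ)

lemma interior_hyperplane_empty {L : Type*} [NormedAddCommGroup L] [NormedSpace ℝ L]
    [FiniteDimensional ℝ L] (φ : L →ₗ[ℝ] ℝ) (hφ : φ ≠ 0) (c : ℝ) :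
    interior {ω | φ ω = c} = ∅ := by
  rw [Set.eq_empty_iff_forall_notMem]
  intro ω hω
  obtain ⟨x, hx⟩ : ∃ x, φ x ≠ 0 := by
    by_contra h; push_neg at h; exact hφ (LinearMap.ext h)
  have hc : Continuous fun t : ℝ => ω + t • x := by continuity
  have hmem : ∀ᶠ t in 𝓝 (0:ℝ), φ (ω + t • x) = c := by
    have hpre : (fun t : ℝ => ω + t • x) ⁻¹' interior {ω | φ ω = c} ∈ 𝓝 (0:ℝ) :=
      (isOpen_interior.preimage hc).mem_nhds (by simpa using hω)
    filter_upwards [hpre] with t ht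
    have h2 : ω + t • x ∈ {ω | φ ω = c} := interior_subset (s := {ω | φ ω = c}) ht
    exact h2
  have hω0 : φ ω = c := interior_subset (s := {ω | φ ω = c}) hω
  have hev : ∀ᶠ t in 𝓝[≠] (0:ℝ), t = 0 := by
    filter_upwards [nhdsWithin_le_nhds hmem] with t ht
    simp only [map_add, map_smul, smul_eq_mul, hω0] at ht
    have h0 : t * φ x = 0 := by linarith
    rcases mul_eq_zero.1 h0 with h | h
    · exact h
    · exact absurd h hx
  obtain ⟨t, ht0, htne⟩ := (hev.and self_mem_nhdsWithin).exists
  exact htne ht0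

/-- Abstract content of Lemma 5.1 of the paper: the set of `ω` for which
`(α_{m,ω}, (s,D,b)) = 0` for some integers `s, b` and some `D` in a countable set `Λ` with
`rD - sξ ≠ 0` is contained in a countable union of proper affine hyperplanes; in particular
its complement is dense. -/
theorem stmt_6 {L : Type*} [NormedAddCommGroup L] [NormedSpace ℝ L] [FiniteDimensional ℝ L]
    (Bl : L →ₗ[ℝ] L →ₗ[ℝ] ℝ) (hsymm : ∀ x y, Bl x y = Bl y x)
    (hnondeg : ∀ x, (∀ y, Bl x y = 0) → x = 0)
    (Λ : Set L) (hΛ : Λ.Countable)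
    (ξ : L) (r a m : ℝ) (hm : m ≠ 0) :
    let N : Set L := {ω | ∃ s b : ℤ, ∃ D ∈ Λ,
      r • D - (s : ℝ) • ξ ≠ 0 ∧
      mukaiPairing Bl (alphaOmega Bl r a m ξ ω) ((s : ℝ), D, (b : ℝ)) = 0}
    (∃ (ι : Type) (_ : Countable ι) (f : ι → (L →ₗ[ℝ] ℝ)) (c : ι → ℝ),
      (∀ i, f i ≠ 0) ∧ N ⊆ ⋃ i, {ω | f i ω = c i}) ∧
    Dense Nᶜ := by
  classical
  intro N
  have key : ∃ (ι : Type) (_ : Countable ι) (f : ι → (L →ₗ[ℝ] ℝ)) (c : ι → ℝ),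
      (∀ i, f i ≠ 0) ∧ N ⊆ ⋃ i, {ω | f i ω = c i} := by
    rcases Λ.eq_empty_or_nonempty with hE | hΛne
    · refine ⟨Empty, inferInstance, Empty.elim, Empty.elim, fun i => i.elim, ?_⟩
      rintro ω ⟨s, b, D, hD, _⟩
      simp [hE] at hD
    rcases subsingleton_or_nontrivial L with hsub | hnt
    · refine ⟨Empty, inferInstance, Empty.elim, Empty.elim, fun i => i.elim, ?_⟩
      rintro ω ⟨s, b, D, hD, hv, _⟩
      exact absurd (Subsingleton.elim _ _) hv
    -- nonzero functional
    obtain ⟨x, hx⟩ := exists_ne (0 : L)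
    obtain ⟨y, hy⟩ : ∃ y, Bl x y ≠ 0 := by
      by_contra h; push_neg at h; exact hx (hnondeg x h)
    have hφ0 : Bl y ≠ 0 := fun h => hy (by rw [hsymm x y, h]; rfl)
    obtain ⟨g, hg⟩ := Set.Countable.exists_eq_range hΛ hΛne
    refine ⟨ℤ × ℤ × ℕ, inferInstance,
      fun p => if r • g p.2.2 - (p.1 : ℝ) • ξ ≠ 0
        then Bl (r • g p.2.2 - (p.1 : ℝ) • ξ) else Bl y,
      fun p => if r • g p.2.2 - (p.1 : ℝ) • ξ ≠ 0
        then ((p.1 : ℝ) * a - r * p.2.1) / m else 0, ?_, ?_⟩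
    · intro p
      dsimp only
      by_cases h : r • g p.2.2 - (p.1 : ℝ) • ξ ≠ 0
      · rw [if_pos h]
        intro hz
        exact h (hnondeg _ (fun z => by rw [hz]; rfl))
      · rw [if_neg h]
        exact hφ0
    · rintro ω ⟨s, b, D, hD, hv, heq⟩
      rw [hg] at hD
      obtain ⟨n, hn⟩ := hD
      refine Set.mem_iUnion.2 ⟨(s, b, n), ?_⟩
      have hv' : r • g n - (s : ℝ) • ξ ≠ 0 := by rw [hn]; exact hv
      show (if r • g n - (s : ℝ) • ξ ≠ 0 then Bl (r • g n - (s : ℝ) • ξ) else Bl y) ω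
          = if r • g n - (s : ℝ) • ξ ≠ 0 then ((s : ℝ) * a - r * b) / m else 0
      rw [if_pos hv', if_pos hv', hn]
      simp only [mukaiPairing, alphaOmega, map_smul, LinearMap.smul_apply,
        smul_eq_mul] at heq
      simp only [map_sub, map_smul, LinearMap.sub_apply, LinearMap.smul_apply, smul_eq_mul]
      rw [hsymm D ω, hsymm ξ ω]
      field_simp
      linear_combination heq
  refine ⟨key, ?_⟩
  obtain ⟨ι, hι, f, c, hf, hsub⟩ := key
  haveI : CompleteSpace L := FiniteDimensional.complete ℝ L
  have hdense : Dense (⋂ i, {ω | f i ω = c i}ᶜ) := by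
    apply dense_iInter_of_isOpen
    · intro i
      have hcont : Continuous (f i) := (f i).continuous_of_finiteDimensional
      exact (isClosed_eq hcont continuous_const).isOpen_compl
    · intro i
      have := interior_hyperplane_empty (f i) (hf i) (c i)
      rwa [interior_eq_empty_iff_dense_compl] at this
  refine hdense.mono ?_
  rw [← Set.compl_iUnion]
  exact Set.compl_subset_compl.2 hsub
end
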